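/- Let C ≥ 1 and N ≥ 2, let p : Fin C → ℝ be a probability vector, and let f : Fin C → ℝ. Then the N-sample LOORF estimator is unbiased: Σ over z : Fin N → Fin C of (Π_n p(z(n))) · [(1/(N−1)) · Σ_n (f(z(n)) − (1/N) · Σ_m f(z(m))) • (e_{z(n)} − p)] = Σ_i p_i · f(i) • (e_i − p), where both sides are vectors in Fin C → ℝ. -/

import Mathlib

open Finset

/-- The one-hot vector `e_i : Fin C → ℝ` with `(e_i)_k = if k = i then 1 else 0`. -/
def oneHot {C : ℕ} (i : Fin C) : Fin C → ℝ :=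
  fun k => if k = i then 1 else 0

lemma sum_prod_pi {C N : ℕ} (q : Fin N → Fin C → ℝ) :
    ∑ z : Fin N → Fin C, ∏ n, q n (z n) = ∏ n, ∑ i, q n i :=
  (Fintype.prod_sum q).symm

lemma marg1 {C N : ℕ} (p : Fin C → ℝ) (hp1 : ∑ i, p i = 1) (g : Fin C → ℝ) (n₀ : Fin N) :
    ∑ z : Fin N → Fin C, (∏ n, p (z n)) * g (z n₀) = ∑ i, p i * g i := by
  have h : ∀ z : Fin N → Fin C,
      (∏ n, p (z n)) * g (z n₀)
        = ∏ n, (fun n i => if n = n₀ then p i * g i else p i) n (z n) := by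
    intro z
    rw [show (∏ n, (fun n i => if n = n₀ then p i * g i else p i) n (z n))
        = (if n₀ = n₀ then p (z n₀) * g (z n₀) else p (z n₀)) *
            ∏ n ∈ univ.erase n₀, (fun n i => if n = n₀ then p i * g i else p i) n (z n)
      from (Finset.mul_prod_erase univ _ (mem_univ n₀)).symm,
      show (∏ n, p (z n)) = p (z n₀) * ∏ n ∈ univ.erase n₀, p (z n)
      from (Finset.mul_prod_erase univ _ (mem_univ n₀)).symm]
    rw [Finset.prod_congr rfl (fun n hn => by
      simp [Finset.ne_of_mem_erase hn] :
      ∀ n ∈ univ.erase n₀, (fun n i => if n = n₀ then p i * g i else p i) n (z n) = p (z n))]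
    simp; ring
  rw [Finset.sum_congr rfl (fun z _ => h z),
    sum_prod_pi (fun n i => if n = n₀ then p i * g i else p i)]
  rw [show (∏ n, ∑ i, (fun n i => if n = n₀ then p i * g i else p i) n i)
      = (∑ i, if n₀ = n₀ then p i * g i else p i) *
          ∏ n ∈ univ.erase n₀, ∑ i, (fun n i => if n = n₀ then p i * g i else p i) n i
    from (Finset.mul_prod_erase univ _ (mem_univ n₀)).symm]
  rw [Finset.prod_congr rfl (fun n hn => by
    simp [Finset.ne_of_mem_erase hn, hp1] :
    ∀ n ∈ univ.erase n₀, (∑ i, (fun n i => if n = n₀ then p i * g i else p i) n i) = 1)]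
  simp

lemma marg2 {C N : ℕ} (p : Fin C → ℝ) (hp1 : ∑ i, p i = 1) (g h : Fin C → ℝ)
    (n₀ m₀ : Fin N) (hnm : n₀ ≠ m₀) :
    ∑ z : Fin N → Fin C, (∏ n, p (z n)) * (g (z n₀) * h (z m₀))
      = (∑ i, p i * g i) * (∑ i, p i * h i) := by
  have hm : m₀ ∈ (univ : Finset (Fin N)).erase n₀ := by simp [hnm.symm]
  set Q : Fin N → Fin C → ℝ :=
    fun n i => if n = n₀ then p i * g i else if n = m₀ then p i * h i else p i with hQ
  have key : ∀ z : Fin N → Fin C,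
      (∏ n, p (z n)) * (g (z n₀) * h (z m₀)) = ∏ n, Q n (z n) := by
    intro z
    rw [show (∏ n, Q n (z n)) = Q n₀ (z n₀) * ∏ n ∈ univ.erase n₀, Q n (z n)
      from (Finset.mul_prod_erase univ _ (mem_univ n₀)).symm,
      show (∏ n ∈ univ.erase n₀, Q n (z n))
        = Q m₀ (z m₀) * ∏ n ∈ (univ.erase n₀).erase m₀, Q n (z n)
      from (Finset.mul_prod_erase _ _ hm).symm,
      show (∏ n, p (z n)) = p (z n₀) * ∏ n ∈ univ.erase n₀, p (z n)
      from (Finset.mul_prod_erase univ _ (mem_univ n₀)).symm,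
      show (∏ n ∈ univ.erase n₀, p (z n))
        = p (z m₀) * ∏ n ∈ (univ.erase n₀).erase m₀, p (z n)
      from (Finset.mul_prod_erase _ _ hm).symm]
    rw [Finset.prod_congr rfl (fun n hn => by
      have h1 : n ≠ n₀ := Finset.ne_of_mem_erase (Finset.mem_of_mem_erase hn)
      have h2 : n ≠ m₀ := Finset.ne_of_mem_erase hn
      simp [hQ, h1, h2] : ∀ n ∈ (univ.erase n₀).erase m₀, Q n (z n) = p (z n))]
    simp only [hQ, if_neg hnm.symm, eq_self_iff_true, if_true]
    ring
  rw [Finset.sum_congr rfl (fun z _ => key z), sum_prod_pi Q]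
  rw [show (∏ n, ∑ i, Q n i) = (∑ i, Q n₀ i) * ∏ n ∈ univ.erase n₀, ∑ i, Q n i
    from (Finset.mul_prod_erase univ _ (mem_univ n₀)).symm,
    show (∏ n ∈ univ.erase n₀, ∑ i, Q n i)
      = (∑ i, Q m₀ i) * ∏ n ∈ (univ.erase n₀).erase m₀, ∑ i, Q n i
    from (Finset.mul_prod_erase _ _ hm).symm]
  rw [Finset.prod_congr rfl (fun n hn => by
    have h1 : n ≠ n₀ := Finset.ne_of_mem_erase (Finset.mem_of_mem_erase hn)
    have h2 : n ≠ m₀ := Finset.ne_of_mem_erase hn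
    simp [hQ, h1, h2, hp1] : ∀ n ∈ (univ.erase n₀).erase m₀, (∑ i, Q n i) = 1)]
  simp only [hQ, if_neg hnm.symm, eq_self_iff_true, if_true, Finset.prod_const_one, mul_one]

lemma key_scalar {C N : ℕ} (hN : 2 ≤ N) (p : Fin C → ℝ) (hp1 : ∑ i, p i = 1)
    (F E : Fin C → ℝ) (hE : ∑ i, p i * E i = 0) :
    ∑ z : Fin N → Fin C, (∏ n, p (z n)) *
        ((1 / ((N : ℝ) - 1)) *
          ∑ n, (F (z n) - (1 / (N : ℝ)) * ∑ m, F (z m)) * E (z n))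
      = ∑ i, p i * (F i * E i) := by
  have hN0 : (N : ℝ) ≠ 0 := by positivity
  have hN1 : (N : ℝ) - 1 ≠ 0 := by
    have : (2 : ℝ) ≤ (N : ℝ) := by exact_mod_cast hN
    intro h; nlinarith
  set S := ∑ i, p i * (F i * E i) with hS
  have hA : (∑ z : Fin N → Fin C, ∑ n, (∏ n', p (z n')) * (F (z n) * E (z n)))
      = (N : ℝ) * S := by
    rw [Finset.sum_comm,
      Finset.sum_congr rfl (fun n _ => marg1 p hp1 (fun i => F i * E i) n)]
    simp [mul_comm]
    exact Or.inl hS.symm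
  have hB : (∑ z : Fin N → Fin C, ∑ n, ∑ m, (∏ n', p (z n')) * (F (z m) * E (z n)))
      = (N : ℝ) * S := by
    rw [Finset.sum_comm, Finset.sum_congr rfl (fun n _ => Finset.sum_comm)]
    have inner : ∀ n m : Fin N,
        (∑ z : Fin N → Fin C, (∏ n', p (z n')) * (F (z m) * E (z n)))
          = if m = n then S else 0 := by
      intro n m
      by_cases hmn : m = n
      · subst hmn
        rw [if_pos rfl, marg1 p hp1 (fun i => F i * E i) m]
      · rw [if_neg hmn, marg2 p hp1 F E m n hmn, hE, mul_zero]
    rw [Finset.sum_congr rfl (fun n _ => Finset.sum_congr rfl (fun m _ => inner n m))]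
    rw [Finset.sum_congr rfl (fun n _ => by simp : ∀ n ∈ univ,
      (∑ m, if m = n then S else 0) = S)]
    simp [mul_comm]
  have step : ∀ z : Fin N → Fin C,
      (∏ n, p (z n)) *
        ((1 / ((N : ℝ) - 1)) *
          ∑ n, (F (z n) - (1 / (N : ℝ)) * ∑ m, F (z m)) * E (z n))
      = (1 / ((N : ℝ) - 1)) *
          ((∑ n, (∏ n', p (z n')) * (F (z n) * E (z n)))
            - (1 / (N : ℝ)) * ∑ n, ∑ m, (∏ n', p (z n')) * (F (z m) * E (z n))) := by
    intro z
    rw [Finset.sum_congr rfl (fun n _ => by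
      rw [sub_mul, mul_assoc, Finset.sum_mul] : ∀ n ∈ univ,
      (F (z n) - (1 / (N : ℝ)) * ∑ m, F (z m)) * E (z n)
        = F (z n) * E (z n) - (1 / (N : ℝ)) * ∑ m, F (z m) * E (z n))]
    rw [Finset.sum_sub_distrib, ← Finset.mul_sum, ← Finset.mul_sum]
    rw [show (∑ n, ∑ m, (∏ n', p (z n')) * (F (z m) * E (z n)))
        = (∏ n', p (z n')) * ∑ n, ∑ m, F (z m) * E (z n) by
      rw [Finset.mul_sum]; exact Finset.sum_congr rfl fun n _ => by rw [Finset.mul_sum]]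
    ring
  rw [Finset.sum_congr rfl (fun z _ => step z), ← Finset.mul_sum,
    Finset.sum_sub_distrib, ← Finset.mul_sum, hA, hB]
  field_simp

/-- the `N`-sample LOORF estimator is unbiased: its expectation over `N`
i.i.d. `Cat(p)` samples equals the score-function gradient `Σ_i p_i · f(i) • (e_i − p)`. -/
theorem loorf_unbiased {C N : ℕ} (hC : 1 ≤ C) (hN : 2 ≤ N) (p : Fin C → ℝ)
    (hp0 : ∀ i, 0 ≤ p i) (hp1 : ∑ i, p i = 1) (f : Fin C → ℝ) :
    ∑ z : Fin N → Fin C, (∏ n, p (z n)) •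
        ((1 / ((N : ℝ) - 1)) •
          ∑ n, (f (z n) - (1 / (N : ℝ)) * ∑ m, f (z m)) • (oneHot (z n) - p))
      = ∑ i, (p i * f i) • (oneHot i - p) := by
  funext k
  have hE : ∑ i, p i * ((if k = i then 1 else 0) - p k) = 0 := by
    have h1 : ∑ i, p i * (if k = i then 1 else 0) = p k := by simp
    have h2 : ∑ i : Fin C, p i * p k = p k := by rw [← Finset.sum_mul, hp1, one_mul]
    rw [Finset.sum_congr rfl (fun i _ => mul_sub (p i) _ _), Finset.sum_sub_distrib,
      h1, h2, sub_self]
  have key : ∑ z : Fin N → Fin C, (∏ n, p (z n)) *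
        ((1 / ((N : ℝ) - 1)) *
          ∑ n, (f (z n) - (1 / (N : ℝ)) * ∑ m, f (z m)) * ((if k = z n then 1 else 0) - p k))
      = ∑ i, p i * (f i * ((if k = i then 1 else 0) - p k)) :=
    key_scalar (C := C) hN p hp1 f (fun i => (if k = i then 1 else 0) - p k) hE
  simp only [Finset.sum_apply, Pi.smul_apply, smul_eq_mul, Pi.sub_apply, oneHot]
  rw [key]
  exact Finset.sum_congr rfl fun i _ => (mul_assoc _ _ _).symm
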